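/- The graph G ⊕ H is disconnected if and only if both G and H have isolated vertices, or G is an empty graph and H is disconnected (up to swapping the roles of G and H). -/

import Mathlib

open SimpleGraph

/-- The Cartesian sum (disjunctive product) of two simple graphs. -/
def cartSum {α β : Type*} (G : SimpleGraph α) (H : SimpleGraph β) :
    SimpleGraph (α × β) where
  Adj x y := G.Adj x.1 y.1 ∨ H.Adj x.2 y.2
  symm := by
    constructor
    intro x y h
    exact h.imp (fun h' => h'.symm) (fun h' => h'.symm)
  loopless := by
    constructor
    intro x h
    exact h.elim (fun h' => h'.ne rfl) (fun h' => h'.ne rfl)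

/-- Two vertices are true twins if they are distinct and have equal closed
neighborhoods. -/
def TrueTwins {α : Type*} (G : SimpleGraph α) (u v : α) : Prop :=
  u ≠ v ∧ ∀ w, (G.Adj u w ∨ u = w) ↔ (G.Adj v w ∨ v = w)

/-- A twins-free clique: a clique containing no pair of true twins. -/
def IsTFClique {α : Type*} (G : SimpleGraph α) (s : Finset α) : Prop :=
  G.IsClique ↑s ∧ ∀ u ∈ s, ∀ v ∈ s, ¬ TrueTwins G u v

/-- The twins-free clique number. -/
noncomputable def tfCliqueNum {α : Type*} (G : SimpleGraph α) [Fintype α] : ℕ :=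
  sSup {n | ∃ s : Finset α, IsTFClique G s ∧ s.card = n}

/-- A strong resolving set: every pair of distinct vertices is strongly
resolved by some vertex of `S`. -/
def IsStrongResolvingSet {α : Type*} (G : SimpleGraph α) (S : Set α) : Prop :=
  ∀ u v : α, u ≠ v → ∃ w ∈ S,
    G.dist w u = G.dist w v + G.dist v u ∨ G.dist w v = G.dist w u + G.dist u v

/-- The strong metric dimension of a graph. -/
noncomputable def sdim {α : Type*} (G : SimpleGraph α) [Fintype α] : ℕ :=
  sInf {n | ∃ S : Finset α, IsStrongResolvingSet G ↑S ∧ S.card = n}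

/-- A vertex is isolated if it has no neighbors. -/
def IsIsolated {α : Type*} (G : SimpleGraph α) (u : α) : Prop :=
  ∀ w, ¬ G.Adj u w

/-- Swapping the factors of a Cartesian sum. -/
def cartSumComm {α β : Type*} (G : SimpleGraph α) (H : SimpleGraph β) :
    (cartSum G H) ≃g (cartSum H G) where
  toEquiv := Equiv.prodComm α β
  map_rel_iff' := by intro x y; exact Or.comm

lemma cartSum_connected_aux {α β : Type*} [Nontrivial α] [Nontrivial β]
    (G : SimpleGraph α) (H : SimpleGraph β)
    (hG : ∀ u, ∃ w, G.Adj u w) (hH : H ≠ ⊥ ∨ G.Connected) :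
    (cartSum G H).Connected := by
  rw [connected_iff]
  refine ⟨?_, inferInstance⟩
  rintro ⟨a, b⟩ ⟨c, d⟩
  rcases hH with hH | hGconn
  · -- `H` has an edge
    have : ∃ e f, H.Adj e f := by
      by_contra hcon
      push_neg at hcon
      exact hH (by ext x y; simp [hcon x y])
    obtain ⟨e, f, hef⟩ := this
    obtain ⟨a', ha'⟩ := hG a
    obtain ⟨c', hc'⟩ := hG c
    have h1 : (cartSum G H).Adj (a, b) (a', f) := Or.inl ha'
    have h2 : (cartSum G H).Adj (a', f) (c', e) := Or.inr hef.symm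
    have h3 : (cartSum G H).Adj (c', e) (c, d) := Or.inl hc'.symm
    exact (h1.reachable.trans h2.reachable).trans h3.reachable
  · -- `G` is connected
    have h1 : (cartSum G H).Reachable (a, b) (c, b) :=
      Reachable.map (⟨fun x => (x, b), fun h => Or.inl h⟩ : G →g (cartSum G H))
        (hGconn.preconnected a c)
    refine h1.trans ?_
    by_cases hbd : b = d
    · subst hbd; exact Reachable.refl _
    · obtain ⟨c', hc'⟩ := hG c
      have h2 : (cartSum G H).Adj (c, b) (c', b) := Or.inl hc'
      have h3 : (cartSum G H).Adj (c', b) (c, d) := Or.inl hc'.symm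
      exact h2.reachable.trans h3.reachable

/-- `G ⊕ H` is disconnected iff both `G` and `H` have isolated
vertices, or one factor is empty and the other is disconnected. -/
theorem cartSum_not_connected_iff {α β : Type*} [Nontrivial α] [Nontrivial β]
    (G : SimpleGraph α) (H : SimpleGraph β) :
    ¬ (cartSum G H).Connected ↔
      ((∃ u, _root_.IsIsolated G u) ∧ (∃ v, _root_.IsIsolated H v)) ∨
      (G = ⊥ ∧ ¬ H.Connected) ∨ (H = ⊥ ∧ ¬ G.Connected) := by
  constructor
  · -- if disconnected then one of the conditions holds
    intro hnc
    by_contra hcon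
    push_neg at hcon
    obtain ⟨h1, h2, h3⟩ := hcon
    apply hnc
    by_cases hGiso : ∃ u, _root_.IsIsolated G u
    · -- then `H` has no isolated vertex
      have hHiso : ∀ v, ¬ _root_.IsIsolated H v := h1 hGiso
      have hH : ∀ v, ∃ w, H.Adj v w := by
        intro v
        by_contra hc
        push_neg at hc
        exact hHiso v (fun w => hc w)
      have hG' : G ≠ ⊥ ∨ H.Connected := by
        by_cases hGbot : G = ⊥
        · exact Or.inr (h2 hGbot)
        · exact Or.inl hGbot
      exact (cartSumComm H G).connected_iff.mp (cartSum_connected_aux H G hH hG')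
    · have hG : ∀ u, ∃ w, G.Adj u w := by
        intro u
        by_contra hc
        push_neg at hc
        exact hGiso ⟨u, fun w => hc w⟩
      have hH' : H ≠ ⊥ ∨ G.Connected := by
        by_cases hHbot : H = ⊥
        · exact Or.inr (h3 hHbot)
        · exact Or.inl hHbot
      exact cartSum_connected_aux G H hG hH'
  · rintro (⟨⟨u, hu⟩, ⟨v, hv⟩⟩ | ⟨hGbot, hHnc⟩ | ⟨hHbot, hGnc⟩) hc
    · -- `(u, v)` is isolated
      obtain ⟨u', hu'⟩ := exists_ne u
      obtain ⟨w⟩ := hc.preconnected (u, v) (u', v)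
      cases w with
      | nil => exact hu' rfl
      | cons h _ => exact h.elim (fun h' => hu _ h') (fun h' => hv _ h')
    · -- `G = ⊥`, `H` disconnected: project to `H`
      have hHpre : ¬ H.Preconnected := by
        intro hp
        exact hHnc ⟨hp⟩
      rw [SimpleGraph.Preconnected] at hHpre
      push_neg at hHpre
      obtain ⟨b, d, hbd⟩ := hHpre
      obtain ⟨a⟩ := (inferInstance : Nonempty α)
      exact hbd (Reachable.map
        (⟨Prod.snd, fun h => h.resolve_left (by subst hGbot; simp)⟩ : (cartSum G H) →g H)
        (hc.preconnected (a, b) (a, d)))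
    · have hGpre : ¬ G.Preconnected := by
        intro hp
        exact hGnc ⟨hp⟩
      rw [SimpleGraph.Preconnected] at hGpre
      push_neg at hGpre
      obtain ⟨b, d, hbd⟩ := hGpre
      obtain ⟨a⟩ := (inferInstance : Nonempty β)
      exact hbd (Reachable.map
        (⟨Prod.fst, fun h => h.resolve_right (by subst hHbot; simp)⟩ : (cartSum G H) →g G)
        (hc.preconnected (b, a) (d, a)))
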